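/- arXiv:2107.05902 — 4 statements merged into one kernel-verified Lean document; each statement's English description precedes it below -/
import Mathlib

section
/- With M, s₃, s₅ as above, the image (s₅ − 1)M equals 2M, the subgroup of elements divisible by 2 in M. -/
/-- `M = (ℤ/4ℤ)⁵ ⊕ (ℤ/2ℤ)`, the Mordell–Weil group `Jac(C₄)(ℚ(ζ₈))` in the
basis `e₁,…,e₆` (with `e₆` of order 2). -/
abbrev M : Type := (Fin 5 → ZMod 4) × ZMod 2

/-- Reduction `ℤ/4ℤ → ℤ/2ℤ`. -/
def r : ZMod 4 → ZMod 2 := ZMod.castHom (show (2:ℕ) ∣ 4 by norm_num) (ZMod 2)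

/-- The lift `ℤ/2ℤ → ℤ/4ℤ`, `a ↦ 2a` (used for matrix entries `2` in the
`e₆`-column). -/
def l : ZMod 2 → ZMod 4 := fun a => 2 * (a.val : ZMod 4)

/-- The matrix `s₃ = [[2,1,0,0,3,0],[1,2,0,0,3,0],[1,1,3,2,0,2],[1,3,0,3,0,0],
[0,0,0,0,1,0],[0,0,0,0,1,1]]` acting on `M`. -/
def s3 : M → M := fun x =>
  (![2 * x.1 0 + x.1 1 + 3 * x.1 4,
     x.1 0 + 2 * x.1 1 + 3 * x.1 4,
     x.1 0 + x.1 1 + 3 * x.1 2 + 2 * x.1 3 + l x.2,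
     x.1 0 + 3 * x.1 1 + 3 * x.1 3,
     x.1 4],
   r (x.1 4) + x.2)

/-- The matrix `s₅ = [[1,2,0,0,2,0],[2,1,0,0,2,0],[2,2,3,0,0,0],[2,0,2,3,0,2],
[0,0,0,0,3,0],[0,0,0,0,0,1]]` acting on `M`. -/
def s5 : M → M := fun x =>
  (![x.1 0 + 2 * x.1 1 + 2 * x.1 4,
     2 * x.1 0 + x.1 1 + 2 * x.1 4,
     2 * x.1 0 + 2 * x.1 1 + 3 * x.1 2,
     2 * x.1 0 + 2 * x.1 2 + 3 * x.1 3 + l x.2,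
     3 * x.1 4],
   x.2)

/-- The image `(s₅ − 1)M` equals `2M`, the subgroup of elements of `M`
divisible by 2. -/
theorem stmt10 : ∀ y : M, (∃ x : M, s5 x - x = y) ↔ ∃ m : M, y = 2 • m := by
  intro y
  constructor
  · rintro ⟨x, rfl⟩
    refine ⟨(![x.1 1 + x.1 4, x.1 0 + x.1 4, x.1 0 + x.1 1 + x.1 2,
        x.1 0 + x.1 2 + x.1 3 + (x.2.val : ZMod 4), x.1 4], 0), ?_⟩
    refine Prod.ext ?_ ?_
    · funext i
      fin_cases i <;> simp [s5, l] <;> ring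
    · simp [s5]
  · rintro ⟨m, rfl⟩
    refine ⟨(![m.1 1 - m.1 4, m.1 0 - m.1 4, m.1 2 - m.1 0 - m.1 1 + 2 * m.1 4,
        m.1 3 + m.1 0 - m.1 2 - m.1 4, m.1 4], 0), ?_⟩
    refine Prod.ext ?_ ?_
    · funext i
      fin_cases i <;> simp [s5, l] <;> ring
    · show (0 : ZMod 2) - 0 = 2 • m.2
      rw [two_smul, CharTwo.add_self_eq_zero]
      simp
end

section
/- With M, s₃ as above, every element a₁e₁ + ⋯ + a₆e₆ in the image (s₃ − 1)M satisfies the congruence a₂ + a₃ + a₆ ≡ 0 (mod 2). The same congruence holds for every element of (s₃s₅ − 1)M. -/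
/-- Every element `a₁e₁ + ⋯ + a₆e₆` of `(s₃ − 1)M` satisfies
`a₂ + a₃ + a₆ ≡ 0 (mod 2)`, and likewise for `(s₃s₅ − 1)M`. -/
theorem stmt11 (x : M) :
    r ((s3 x - x).1 1) + r ((s3 x - x).1 2) + (s3 x - x).2 = 0 ∧
    r ((s3 (s5 x) - x).1 1) + r ((s3 (s5 x) - x).1 2) + (s3 (s5 x) - x).2 = 0 := by
  obtain ⟨a, b⟩ := x
  have h2 : ∀ y : ZMod 4, ZMod.castHom (show (2:ℕ) ∣ 4 by norm_num) (ZMod 2) (2 * y) = 0 := by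
    decide
  have hr : (r : ZMod 4 → ZMod 2) = ZMod.castHom (show (2:ℕ) ∣ 4 by norm_num) (ZMod 2) := rfl
  constructor
  · show r (a 0 + 2 * a 1 + 3 * a 4 - a 1)
        + r (a 0 + a 1 + 3 * a 2 + 2 * a 3 + l b - a 2) + (r (a 4) + b - b) = 0
    rw [add_sub_cancel_right, hr, l, ← map_add, ← map_add,
      show (a 0 + 2 * a 1 + 3 * a 4 - a 1) + (a 0 + a 1 + 3 * a 2 + 2 * a 3 + 2 * ((b.val : ZMod 4)) - a 2) + a 4
        = 2 * (a 0 + a 1 + a 2 + a 3 + 2 * a 4 + (b.val : ZMod 4)) by ring, h2]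
  · show r ((a 0 + 2 * a 1 + 2 * a 4) + 2 * (2 * a 0 + a 1 + 2 * a 4) + 3 * (3 * a 4) - a 1)
        + r ((a 0 + 2 * a 1 + 2 * a 4) + (2 * a 0 + a 1 + 2 * a 4)
            + 3 * (2 * a 0 + 2 * a 1 + 3 * a 2) + 2 * (2 * a 0 + 2 * a 2 + 3 * a 3 + l b) + l b - a 2)
        + (r (3 * a 4) + b - b) = 0
    rw [add_sub_cancel_right, hr, l, ← map_add, ← map_add,
      show ((a 0 + 2 * a 1 + 2 * a 4) + 2 * (2 * a 0 + a 1 + 2 * a 4) + 3 * (3 * a 4) - a 1)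
        + ((a 0 + 2 * a 1 + 2 * a 4) + (2 * a 0 + a 1 + 2 * a 4)
            + 3 * (2 * a 0 + 2 * a 1 + 3 * a 2) + 2 * (2 * a 0 + 2 * a 2 + 3 * a 3 + 2 * ((b.val : ZMod 4))) + 2 * ((b.val : ZMod 4)) - a 2)
        + 3 * a 4
        = 2 * (9 * a 0 + 6 * a 1 + 6 * a 2 + 3 * a 3 + 11 * a 4 + 3 * (b.val : ZMod 4)) by ring, h2]
end

section
/- In M = (ℤ/4ℤ)⁵ ⊕ (ℤ/2ℤ), the element 2e₁ + 2e₃ + 3e₄ is not divisible by 2, i.e., it does not lie in 2M. Combined with (s₅−1)M = 2M, this shows the affine map x ↦ s₅x + (2e₁ + 2e₃ + 3e₄) has no fixed point in M. -/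
/-- `2e₁ + 2e₃ + 3e₄ = (σ₅−1)[A₀]`. -/
def v : M := (![2, 0, 2, 3, 0], 0)

/-- `2e₁ + 2e₃ + 3e₄` is not divisible by 2 in `M`; combined with
`(s₅−1)M = 2M`, the affine map `x ↦ s₅x + (2e₁+2e₃+3e₄)` has no fixed point. -/
theorem stmt12 : (¬ ∃ m : M, v = 2 • m) ∧ (∀ x : M, s5 x + v ≠ x) := by
  constructor
  · rintro ⟨m, h⟩
    have h3 := congrFun (congrArg Prod.fst h) 3
    simp only [v, Prod.smul_fst, Pi.smul_apply, Matrix.cons_val_three,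
      Matrix.head_cons, Matrix.tail_cons, Matrix.cons_val_succ,
      Matrix.cons_val_zero, smul_eq_mul] at h3
    revert h3
    generalize m.1 3 = a
    revert a
    decide
  · intro x h
    have h3 := congrFun (congrArg Prod.fst h) 3
    simp only [s5, v, l, Prod.fst_add, Pi.add_apply, Matrix.cons_val_three,
      Matrix.head_cons, Matrix.tail_cons, Matrix.cons_val_succ, Matrix.cons_val_zero] at h3
    revert h3
    generalize x.1 0 = a
    generalize x.1 2 = b
    generalize x.1 3 = c
    generalize x.2 = d
    revert a b c d
    decide
end

section
/- The elements 3e₁ + 3e₂ + 2e₃ + 3e₄ and 3e₁ + e₂ + 2e₄ of M = (ℤ/4ℤ)⁵ ⊕ (ℤ/2ℤ) violate the congruence a₂ + a₃ + a₆ ≡ 0 (mod 2); hence neither lies in (s₃ − 1)M nor in (s₃s₅ − 1)M, and the affine maps x ↦ s₃x + (3e₁+3e₂+2e₃+3e₄) and x ↦ s₃s₅x + (3e₁+e₂+2e₄) have no fixed points in M. -/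
/-- `3e₁ + 3e₂ + 2e₃ + 3e₄ = (σ₃−1)[A₀]`. -/
def w1 : M := (![3, 3, 2, 3, 0], 0)

/-- `3e₁ + e₂ + 2e₄ = (σ₃σ₅−1)[A₀]`. -/
def w2 : M := (![3, 1, 0, 2, 0], 0)

def R (x : M) : ZMod 2 := r (x.1 1) + r (x.1 2) + x.2

lemma r_add (a b : ZMod 4) : r (a + b) = r a + r b := map_add _ a b
lemma r_sub (a b : ZMod 4) : r (a - b) = r a - r b := map_sub _ a b
lemma r_two (t : ZMod 4) : r (2 * t) = 0 := by revert t; decide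
lemma r_three (t : ZMod 4) : r (3 * t) = r t := by revert t; decide
lemma r_l (a : ZMod 2) : r (l a) = 0 := by revert a; decide

lemma key3 (x : M) : R (s3 x - x) = 0 := by
  obtain ⟨f, a⟩ := x
  simp only [R, s3, Prod.fst_sub, Prod.snd_sub, Pi.sub_apply,
    Matrix.cons_val_one, Matrix.head_cons, Matrix.cons_val_zero, Matrix.cons_val_fin_one, Matrix.cons_val_two, Matrix.tail_cons,
    r_add, r_sub, r_two, r_three, r_l]
  generalize r (f 0) = u0
  generalize r (f 1) = u1
  generalize r (f 2) = u2
  generalize r (f 4) = u4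
  revert u0 u1 u2 u4 a
  decide

lemma key35 (x : M) : R (s3 (s5 x) - x) = 0 := by
  obtain ⟨f, a⟩ := x
  simp only [R, s3, s5, Prod.fst_sub, Prod.snd_sub, Pi.sub_apply,
    Matrix.cons_val_one, Matrix.head_cons, Matrix.cons_val_zero, Matrix.cons_val_fin_one,
    Matrix.cons_val_two, Matrix.tail_cons, Matrix.cons_val_three, Matrix.cons_val_four,
    Matrix.head_fin_const,
    r_add, r_sub, r_two, r_three, r_l]
  generalize r (f 0) = u0
  generalize r (f 1) = u1
  generalize r (f 2) = u2
  generalize r (f 4) = u4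
  revert u0 u1 u2 u4 a
  decide

/-- The elements `3e₁+3e₂+2e₃+3e₄` and `3e₁+e₂+2e₄` violate the congruence
`a₂ + a₃ + a₆ ≡ 0 (mod 2)`; hence neither lies in `(s₃−1)M` nor in
`(s₃s₅−1)M`, and the affine maps `x ↦ s₃x + w₁` and `x ↦ s₃s₅x + w₂` have no
fixed points in `M`. -/
theorem stmt13 :
    (r (w1.1 1) + r (w1.1 2) + w1.2 ≠ 0) ∧
    (r (w2.1 1) + r (w2.1 2) + w2.2 ≠ 0) ∧
    (¬ ∃ x : M, s3 x - x = w1) ∧ (¬ ∃ x : M, s3 (s5 x) - x = w1) ∧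
    (¬ ∃ x : M, s3 x - x = w2) ∧ (¬ ∃ x : M, s3 (s5 x) - x = w2) ∧
    (∀ x : M, s3 x + w1 ≠ x) ∧ (∀ x : M, s3 (s5 x) + w2 ≠ x) := by
  refine ⟨by decide, by decide, ?_, ?_, ?_, ?_, ?_, ?_⟩
  · rintro ⟨x, hx⟩; have h := key3 x; rw [hx] at h; revert h; decide
  · rintro ⟨x, hx⟩; have h := key35 x; rw [hx] at h; revert h; decide
  · rintro ⟨x, hx⟩; have h := key3 x; rw [hx] at h; revert h; decide
  · rintro ⟨x, hx⟩; have h := key35 x; rw [hx] at h; revert h; decide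
  · intro x hx
    have h2 : s3 x - x = -w1 := by rw [eq_sub_of_add_eq hx]; abel
    have h := key3 x; rw [h2] at h; revert h; decide
  · intro x hx
    have h2 : s3 (s5 x) - x = -w2 := by rw [eq_sub_of_add_eq hx]; abel
    have h := key35 x; rw [h2] at h; revert h; decide
end
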